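/- Let ψ : ℝ² → ℝ² be a bijective linear map. Then for every r ∈ {1, …, k} and every z ∈ ψ({λ·v_{r−1} + λ′·v_r : λ, λ′ ≥ 0}), the gauge of ψ(R_k) satisfies G_{ψ(R_k)}(z) = [ (sin θ_r − sin θ_{r−1})·(ψ⁻¹(z))₁ + (cos θ_{r−1} − cos θ_r)·(ψ⁻¹(z))₂ ] / sin θ₁. In particular, the restriction of G_{ψ(R_k)} to each cone ψ({λ·v_{r−1} + λ′·v_r : λ, λ′ ≥ 0}) is linear. -/

import Mathlib

open Pointwise

/-- The gauge (Minkowski functional) of a set `K ⊆ ℝ²`: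
`G_K(z) = inf {λ ≥ 0 : z ∈ λK}`. -/
noncomputable def gaugeFn (K : Set (ℝ × ℝ)) (z : ℝ × ℝ) : ℝ :=
  sInf {l : ℝ | 0 ≤ l ∧ z ∈ l • K}

/-- `θ_r = 2πr/k`. -/
noncomputable def theta (k : ℕ) (r : ℤ) : ℝ := 2 * Real.pi * (r : ℝ) / (k : ℝ)

/-- `v_r = (cos θ_r, sin θ_r)`. -/
noncomputable def vtx (k : ℕ) (r : ℤ) : ℝ × ℝ :=
  (Real.cos (theta k r), Real.sin (theta k r))

/-- The regular `k`-gon `R_k`: the convex hull of `{v_1, …, v_k}`. -/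
noncomputable def Rgon (k : ℕ) : Set (ℝ × ℝ) :=
  convexHull ℝ {z : ℝ × ℝ | ∃ r : ℤ, 1 ≤ r ∧ r ≤ (k : ℤ) ∧ z = vtx k r}

/- ### Auxiliary lemmas -/

section Aux

variable {k : ℕ}

lemma kR_pos (hk : 4 ≤ k) : (0:ℝ) < (k:ℝ) := by
  have : (4:ℝ) ≤ (k:ℝ) := by exact_mod_cast hk
  linarith

/-- `θ_r − θ_{r-1} = θ_1`. -/
lemma theta_sub (hk : 4 ≤ k) (r : ℤ) : theta k r - theta k (r - 1) = theta k 1 := by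
  have hk0 : (k:ℝ) ≠ 0 := ne_of_gt (kR_pos hk)
  unfold theta
  push_cast
  field_simp
  ring

lemma pi_div_k_pos (hk : 4 ≤ k) : 0 < Real.pi / (k:ℝ) :=
  div_pos Real.pi_pos (kR_pos hk)

lemma pi_div_k_le (hk : 4 ≤ k) : Real.pi / (k:ℝ) ≤ Real.pi / 4 := by
  have h4 : (4:ℝ) ≤ (k:ℝ) := by exact_mod_cast hk
  exact div_le_div_of_nonneg_left Real.pi_pos.le (by norm_num) h4

lemma theta_one_eq (hk : 4 ≤ k) : theta k 1 = 2 * (Real.pi / (k:ℝ)) := by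
  unfold theta; push_cast; ring

lemma sin_pi_div_k_pos (hk : 4 ≤ k) : 0 < Real.sin (Real.pi / (k:ℝ)) := by
  apply Real.sin_pos_of_pos_of_lt_pi (pi_div_k_pos hk)
  have := pi_div_k_le hk
  linarith [Real.pi_pos]

lemma sin_theta_one_pos (hk : 4 ≤ k) : 0 < Real.sin (theta k 1) := by
  rw [theta_one_eq hk]
  apply Real.sin_pos_of_pos_of_lt_pi
  · linarith [pi_div_k_pos hk]
  · have := pi_div_k_le hk
    linarith [Real.pi_pos]

/-- For an odd integer `m`, `cos (m·π/k) ≤ cos (π/k)`. -/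
lemma cos_odd_mul_le (hk : 4 ≤ k) {m : ℤ} (hm : Odd m) :
    Real.cos ((m : ℝ) * (Real.pi / (k:ℝ))) ≤ Real.cos (Real.pi / (k:ℝ)) := by
  have hkZ : (0:ℤ) < 2 * (k:ℤ) := by positivity
  set j : ℤ := m % (2 * (k:ℤ)) with hj
  set q : ℤ := m / (2 * (k:ℤ)) with hq
  have hmj : m = 2 * (k:ℤ) * q + j := by
    rw [hj, hq]
    have h := Int.mul_ediv_add_emod m (2*(k:ℤ))
    linarith
  have hj0 : 0 ≤ j := Int.emod_nonneg m (ne_of_gt hkZ)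
  have hjlt : j < 2 * (k:ℤ) := Int.emod_lt_of_pos m hkZ
  have hjodd : j % 2 = 1 := by
    have h2 : (2:ℤ) ∣ 2 * (k:ℤ) := ⟨(k:ℤ), rfl⟩
    rw [hj, Int.emod_emod_of_dvd m h2]
    exact Int.odd_iff.mp hm
  have hj1 : 1 ≤ j := by omega
  have hjle : j ≤ 2 * (k:ℤ) - 1 := by omega
  -- reduce using periodicity
  have hkne : (k:ℝ) ≠ 0 := ne_of_gt (kR_pos hk)
  have harg : (m : ℝ) * (Real.pi / (k:ℝ))
      = (j : ℝ) * (Real.pi / (k:ℝ)) + (q : ℝ) * (2 * Real.pi) := by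
    have : (m : ℝ) = 2 * (k:ℝ) * (q:ℝ) + (j:ℝ) := by exact_mod_cast congrArg Int.cast hmj
    rw [this]; field_simp; ring
  rw [harg, Real.cos_add_int_mul_two_pi]
  -- now `cos (j·π/k) ≤ cos (π/k)` with `1 ≤ j ≤ 2k−1`
  set p : ℝ := Real.pi / (k:ℝ) with hp
  have hp0 : 0 < p := pi_div_k_pos hk
  have hjR1 : (1:ℝ) ≤ (j:ℝ) := by exact_mod_cast hj1
  have hjRle : (j:ℝ) ≤ 2 * (k:ℝ) - 1 := by
    have : (j:ℝ) ≤ ((2 * (k:ℤ) - 1 : ℤ) : ℝ) := by exact_mod_cast hjle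
    push_cast at this; linarith
  have hxlow : p ≤ (j:ℝ) * p := by nlinarith
  have hkp : (k:ℝ) * p = Real.pi := by rw [hp]; field_simp
  have hxhigh : (j:ℝ) * p ≤ 2 * Real.pi - p := by nlinarith
  rcases le_or_gt ((j:ℝ) * p) Real.pi with hle | hgt
  · exact Real.cos_le_cos_of_nonneg_of_le_pi hp0.le hle hxlow
  · rw [← Real.cos_two_pi_sub]
    apply Real.cos_le_cos_of_nonneg_of_le_pi hp0.le
    · linarith
    · linarith

/-- The key upper bound: the linear functional is `≤ sin θ₁` at every vertex. -/
lemma functional_le_at_vtx (hk : 4 ≤ k) (r s : ℤ) :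
    (Real.sin (theta k r) - Real.sin (theta k (r - 1))) * Real.cos (theta k s)
      + (Real.cos (theta k (r - 1)) - Real.cos (theta k r)) * Real.sin (theta k s)
      ≤ Real.sin (theta k 1) := by
  have hkne : (k:ℝ) ≠ 0 := ne_of_gt (kR_pos hk)
  set p : ℝ := Real.pi / (k:ℝ) with hp
  -- LHS = sin(θr − θs) + sin(θs − θ_{r−1})
  have h1 : (Real.sin (theta k r) - Real.sin (theta k (r - 1))) * Real.cos (theta k s)
      + (Real.cos (theta k (r - 1)) - Real.cos (theta k r)) * Real.sin (theta k s)
      = Real.sin (theta k r - theta k s) + Real.sin (theta k s - theta k (r-1)) := by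
    rw [Real.sin_sub, Real.sin_sub]; ring
  -- sum to product
  have h2 : Real.sin (theta k r - theta k s) + Real.sin (theta k s - theta k (r-1))
      = 2 * Real.sin p * Real.cos (((2*r - 1 - 2*s : ℤ) : ℝ) * p) := by
    have hs := Real.sin_sub_sin (theta k r - theta k s) (-(theta k s - theta k (r-1)))
    rw [Real.sin_neg, sub_neg_eq_add] at hs
    rw [sub_neg_eq_add] at hs <;> skip
    have e1 : (theta k r - theta k s + (theta k s - theta k (r-1))) / 2 = p := by
      unfold theta; rw [hp]; push_cast; field_simp; ring
    have e2 : (theta k r - theta k s + -(theta k s - theta k (r-1))) / 2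
        = ((2*r - 1 - 2*s : ℤ) : ℝ) * p := by
      unfold theta; rw [hp]; push_cast; field_simp; ring
    rw [e1, e2] at hs
    linarith
  have h3 : Real.sin (theta k 1) = 2 * Real.sin p * Real.cos p := by
    rw [theta_one_eq hk, Real.sin_two_mul, hp]
  rw [h1, h2, h3]
  have hodd : Odd (2*r - 1 - 2*s) := ⟨r - s - 1, by ring⟩
  have := cos_odd_mul_le hk hodd
  have hsp := sin_pi_div_k_pos hk
  rw [← hp] at hsp this
  nlinarith

/-- The vertex set. -/
def Vset (k : ℕ) : Set (ℝ × ℝ) :=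
  {z : ℝ × ℝ | ∃ r : ℤ, 1 ≤ r ∧ r ≤ (k : ℤ) ∧ z = vtx k r}

lemma Rgon_eq : Rgon k = convexHull ℝ (Vset k) := rfl

lemma vtx_mem_Vset (r : ℤ) (h1 : 1 ≤ r) (h2 : r ≤ (k:ℤ)) : vtx k r ∈ Vset k :=
  ⟨r, h1, h2, rfl⟩

lemma vtx_zero_eq (hk : 4 ≤ k) : vtx k 0 = vtx k (k:ℤ) := by
  have hkne : (k:ℝ) ≠ 0 := ne_of_gt (kR_pos hk)
  have h0 : theta k 0 = 0 := by unfold theta; simp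
  have hkk : theta k (k:ℤ) = 2 * Real.pi := by unfold theta; push_cast; field_simp
  unfold vtx
  rw [h0, hkk, Real.cos_two_pi, Real.sin_two_pi, Real.cos_zero, Real.sin_zero]

lemma vtx_prev_mem_Vset (hk : 4 ≤ k) (r : ℤ) (h1 : 1 ≤ r) (h2 : r ≤ (k:ℤ)) :
    vtx k (r - 1) ∈ Vset k := by
  rcases eq_or_lt_of_le h1 with h | h
  · rw [← h]
    norm_num
    rw [vtx_zero_eq hk]
    exact vtx_mem_Vset (k:ℤ) (by omega) le_rfl
  · exact vtx_mem_Vset (r-1) (by omega) (by omega)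

lemma zero_mem_Rgon (hk : 4 ≤ k) (hke : Even k) : (0 : ℝ × ℝ) ∈ Rgon k := by
  obtain ⟨m, hm⟩ := hke
  have hm2 : 2 ≤ m := by omega
  have h1 : vtx k 1 ∈ Vset k := vtx_mem_Vset 1 le_rfl (by omega)
  have h2 : vtx k (1 + m) ∈ Vset k :=
    vtx_mem_Vset (1 + (m:ℤ)) (by omega) (by push_cast; omega)
  have hneg : vtx k (1 + (m:ℤ)) = -vtx k 1 := by
    have hkne : (k:ℝ) ≠ 0 := ne_of_gt (kR_pos hk)
    have ht : theta k (1 + (m:ℤ)) = theta k 1 + Real.pi := by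
      unfold theta
      push_cast
      have hkR : (k:ℝ) = (m:ℝ) + (m:ℝ) := by exact_mod_cast congrArg (Nat.cast : ℕ → ℝ) hm
      field_simp
      rw [hkR]; ring
    unfold vtx
    rw [ht, Real.cos_add_pi, Real.sin_add_pi]
    rfl
  have hconv := convex_convexHull ℝ (Vset k)
  have hmem1 : vtx k 1 ∈ convexHull ℝ (Vset k) := subset_convexHull ℝ _ h1
  have hmem2 : vtx k (1 + (m:ℤ)) ∈ convexHull ℝ (Vset k) := subset_convexHull ℝ _ h2
  have := hconv hmem1 hmem2 (by norm_num : (0:ℝ) ≤ 1/2) (by norm_num : (0:ℝ) ≤ 1/2)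
    (by norm_num)
  rw [Rgon_eq]
  convert this using 1
  rw [hneg]
  module

/-- Every point of the polygon satisfies the linear inequality. -/
lemma Rgon_subset_halfspace (hk : 4 ≤ k) (r : ℤ) :
    ∀ z ∈ Rgon k,
      (Real.sin (theta k r) - Real.sin (theta k (r - 1))) * z.1
        + (Real.cos (theta k (r - 1)) - Real.cos (theta k r)) * z.2
        ≤ Real.sin (theta k 1) := by
  set a := Real.sin (theta k r) - Real.sin (theta k (r - 1))
  set b := Real.cos (theta k (r - 1)) - Real.cos (theta k r)
  have hlin : IsLinearMap ℝ (fun z : ℝ × ℝ => a * z.1 + b * z.2) := by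
    constructor
    · intro x y; simp only [Prod.fst_add, Prod.snd_add]; ring
    · intro c x; simp only [Prod.smul_fst, Prod.smul_snd, smul_eq_mul]; ring
  have hH : Convex ℝ {z : ℝ × ℝ | a * z.1 + b * z.2 ≤ Real.sin (theta k 1)} :=
    convex_halfSpace_le hlin _
  intro z hz
  have : Rgon k ⊆ {z : ℝ × ℝ | a * z.1 + b * z.2 ≤ Real.sin (theta k 1)} := by
    rw [Rgon_eq]
    apply convexHull_min _ hH
    rintro w ⟨s, _, _, rfl⟩
    exact functional_le_at_vtx hk r s
  exact this hz

/-- Value of the functional at `v_{r-1}`. -/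
lemma functional_at_prev (hk : 4 ≤ k) (r : ℤ) :
    (Real.sin (theta k r) - Real.sin (theta k (r - 1))) * (vtx k (r-1)).1
      + (Real.cos (theta k (r - 1)) - Real.cos (theta k r)) * (vtx k (r-1)).2
      = Real.sin (theta k 1) := by
  unfold vtx
  rw [← theta_sub hk r, Real.sin_sub]
  ring

/-- Value of the functional at `v_r`. -/
lemma functional_at_curr (hk : 4 ≤ k) (r : ℤ) :
    (Real.sin (theta k r) - Real.sin (theta k (r - 1))) * (vtx k r).1
      + (Real.cos (theta k (r - 1)) - Real.cos (theta k r)) * (vtx k r).2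
      = Real.sin (theta k 1) := by
  unfold vtx
  rw [← theta_sub hk r, Real.sin_sub]
  ring

end Aux

/-- For a bijective linear map `ψ : ℝ² → ℝ²`, on each cone
`ψ({λ·v_{r−1} + λ′·v_r : λ, λ′ ≥ 0})` (with `1 ≤ r ≤ k`) the gauge of `ψ(R_k)`
satisfies
`G_{ψ(R_k)}(z) = [(sin θ_r − sin θ_{r−1})·(ψ⁻¹z)₁ + (cos θ_{r−1} − cos θ_r)·(ψ⁻¹z)₂] / sin θ₁`;
in particular the restriction of the gauge to each such cone is linear. -/
theorem gauge_polygonal_norm_linear_on_cones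
    (k : ℕ) (hk : 4 ≤ k) (hke : Even k)
    (ψ : (ℝ × ℝ) →ₗ[ℝ] (ℝ × ℝ)) (hψ : Function.Bijective ψ)
    (r : ℤ) (hr1 : 1 ≤ r) (hrk : r ≤ (k : ℤ))
    (lam lam' : ℝ) (hlam : 0 ≤ lam) (hlam' : 0 ≤ lam') :
    gaugeFn (ψ '' Rgon k) (ψ (lam • vtx k (r - 1) + lam' • vtx k r))
      = ((Real.sin (theta k r) - Real.sin (theta k (r - 1)))
            * (lam • vtx k (r - 1) + lam' • vtx k r).1
        + (Real.cos (theta k (r - 1)) - Real.cos (theta k r))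
            * (lam • vtx k (r - 1) + lam' • vtx k r).2)
        / Real.sin (theta k 1) := by
  set a := Real.sin (theta k r) - Real.sin (theta k (r - 1)) with ha
  set b := Real.cos (theta k (r - 1)) - Real.cos (theta k r) with hb
  set S := Real.sin (theta k 1) with hS
  have hSpos : 0 < S := sin_theta_one_pos hk
  set w : ℝ × ℝ := lam • vtx k (r - 1) + lam' • vtx k r with hw
  set t : ℝ := lam + lam' with ht
  have ht0 : 0 ≤ t := by positivity
  -- the functional value at w
  have hfw : a * w.1 + b * w.2 = t * S := by
    have h1 := functional_at_prev hk r
    have h2 := functional_at_curr hk r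
    rw [hw]
    simp only [Prod.fst_add, Prod.snd_add, Prod.smul_fst, Prod.smul_snd, smul_eq_mul]
    rw [← ha, ← hb] at h1 h2
    rw [ht]
    nlinarith [h1, h2]
  -- reduce the gauge over the image to the gauge over Rgon
  have himg : ∀ l : ℝ, (ψ w ∈ l • (ψ '' Rgon k)) ↔ w ∈ l • Rgon k := by
    intro l
    have him : l • (ψ '' Rgon k) = ψ '' (l • Rgon k) := by
      ext x
      constructor
      · rintro ⟨u, ⟨v, hv, rfl⟩, rfl⟩
        exact ⟨l • v, Set.mem_smul_set.mpr ⟨v, hv, rfl⟩, map_smul ψ l v⟩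
      · rintro ⟨u, hu, rfl⟩
        obtain ⟨v, hv, rfl⟩ := Set.mem_smul_set.mp hu
        exact Set.mem_smul_set.mpr ⟨ψ v, ⟨v, hv, rfl⟩, (map_smul ψ l v).symm⟩
    rw [him]
    constructor
    · rintro ⟨u, hu, huw⟩
      rwa [← hψ.injective huw]
    · intro hwl
      exact ⟨w, hwl, rfl⟩
  -- the membership set is exactly [t, ∞)
  have hVne : vtx k 1 ∈ Rgon k :=
    subset_convexHull ℝ _ (vtx_mem_Vset 1 le_rfl (by omega))
  have hne : (Rgon k).Nonempty := ⟨_, hVne⟩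
  have hzero : (0 : ℝ × ℝ) ∈ Rgon k := zero_mem_Rgon hk hke
  have hset : {l : ℝ | 0 ≤ l ∧ ψ w ∈ l • (ψ '' Rgon k)} = Set.Ici t := by
    ext l
    simp only [Set.mem_setOf_eq, himg, Set.mem_Ici]
    constructor
    · rintro ⟨hl0, hwl⟩
      obtain ⟨u, hu, huw⟩ := Set.mem_smul_set.mp hwl
      have hub := Rgon_subset_halfspace hk r u hu
      rw [← ha, ← hb, ← hS] at hub
      have hw1 : w.1 = l * u.1 := by rw [← huw]; rfl
      have hw2 : w.2 = l * u.2 := by rw [← huw]; rfl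
      have : t * S ≤ l * S := by
        rw [← hfw, hw1, hw2]
        calc a * (l * u.1) + b * (l * u.2) = l * (a * u.1 + b * u.2) := by ring
        _ ≤ l * S := by nlinarith
      exact le_of_mul_le_mul_right (by linarith) hSpos
    · intro hlt
      have hl0 : 0 ≤ l := le_trans ht0 hlt
      refine ⟨hl0, ?_⟩
      have hmem1 : vtx k (r-1) ∈ Rgon k :=
        subset_convexHull ℝ _ (vtx_prev_mem_Vset hk r hr1 hrk)
      have hmem2 : vtx k r ∈ Rgon k :=
        subset_convexHull ℝ _ (vtx_mem_Vset r hr1 hrk)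
      rcases eq_or_lt_of_le ht0 with htz | htpos
      · -- t = 0, hence lam = lam' = 0, w = 0
        have hlam0 : lam = 0 := by rw [ht] at htz; linarith
        have hlam'0 : lam' = 0 := by rw [ht] at htz; linarith
        have hw0 : w = 0 := by rw [hw, hlam0, hlam'0]; module
        rcases eq_or_lt_of_le hl0 with hl | hl
        · rw [hw0, ← hl, Set.zero_smul_set hne]
          exact Set.mem_zero.mpr rfl
        · rw [hw0]
          exact Set.mem_smul_set.mpr ⟨0, hzero, smul_zero l⟩
      · -- t > 0
        have hlpos : 0 < l := lt_of_lt_of_le htpos hlt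
        have hu : (lam / t) • vtx k (r-1) + (lam' / t) • vtx k r ∈ Rgon k := by
          rw [Rgon_eq] at hmem1 hmem2 ⊢
          exact convex_convexHull ℝ (Vset k) hmem1 hmem2
            (div_nonneg hlam (le_of_lt htpos)) (div_nonneg hlam' (le_of_lt htpos))
            (by field_simp; linarith)
        have hu2 : (t / l) • ((lam / t) • vtx k (r-1) + (lam' / t) • vtx k r) ∈ Rgon k := by
          apply (convex_convexHull ℝ (Vset k)).smul_mem_of_zero_mem hzero hu
          constructor
          · positivity
          · rw [div_le_one hlpos]; exact hlt
        refine Set.mem_smul_set.mpr ⟨_, hu2, ?_⟩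
        rw [smul_smul, smul_add, smul_smul, smul_smul, hw]
        have h1 : l * (t / l) * (lam / t) = lam := by field_simp
        have h2 : l * (t / l) * (lam' / t) = lam' := by field_simp
        rw [h1, h2]
  have hval : gaugeFn (ψ '' Rgon k) (ψ w) = t := by
    rw [gaugeFn, hset]; exact csInf_Ici
  rw [hval, hfw, mul_div_assoc, div_self hSpos.ne', mul_one]
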